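/- Let K ⊆ ℝ^d be a convex set of diameter at most D > 0, T ≥ 4, λ, G > 0, and let ℓ₁, …, ℓ_T : ℝ^d → ℝ be differentiable functions that are λ-strongly convex on K in the paper's convention (ℓ_t(μ) − ℓ_t(μ₀) ≤ ⟨∇ℓ_t(μ), μ − μ₀⟩ − λ‖μ − μ₀‖² for μ, μ₀ ∈ K) with ‖∇ℓ_t(x)‖ ≤ G for all x ∈ K. Set α := λ/G², γ := (1/2)·min(1/(G·D), α), ε := 1/(γ²D²). Write ∇_t := ∇ℓ_t(μ̂_t), A₀ := ε·I_d, A_t := A_{t−1} + ∇_t∇_tᵀ, μ̂_{temp,t+1} := μ̂_t − (1/γ)·A_t⁻¹∇_t. Suppose μ̂₁,…, μ̂_{T+1} ∈ K satisfy, for every 1 ≤ t ≤ T, the ADJUST contraction (μ̂_{t+1} − ν_{t+1})ᵀ A_t (μ̂_{t+1} − ν_{t+1}) ≤ (μ̂_{temp,t+1} − ν_t)ᵀ A_t (μ̂_{temp,t+1} − ν_t), and suppose ν₁, …, ν_{T+1} ∈ K satisfy ℓ_t(ν_{t+1}) − ℓ_t(μ*_t) ≤ G²(1 + log T)/(λT)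 for every t, where μ*_t ∈ K minimises ℓ_t over K. Then Σ_{t=1}^{T} ℓ_t(μ̂_t) − Σ_{t=1}^{T} ℓ_t(μ*_t) ≤ G·Σ_{t=1}^{T}‖ν_{t+1} − ν_t‖ − λ·Σ_{t=1}^{T}‖ν_{t+1} − ν_t‖² + 2·((G²/λ)(d+1) + d·G·D)·(1 + log T). -/

import Mathlib

set_option linter.unusedSectionVars false
set_option maxHeartbeats 2000000

open Matrix RealInnerProductSpace Finset

namespace DonsAux

variable {n : Type*} [Fintype n] [DecidableEq n]

lemma dot_mulVec_symm {M : Matrix n n ℝ} (h : M.IsHermitian) (x y : n → ℝ) :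
    x ⬝ᵥ M *ᵥ y = y ⬝ᵥ M *ᵥ x := by
  have ht : Mᵀ = M := by
    have := h.eq
    rwa [Matrix.conjTranspose_eq_transpose_of_trivial] at this
  rw [Matrix.dotProduct_mulVec, ← ht, Matrix.vecMul_transpose, ht, dotProduct_comm]

lemma vecMulVec_mulVec' (u v x : n → ℝ) :
    (Matrix.vecMulVec u v) *ᵥ x = (v ⬝ᵥ x) • u := by
  ext i
  simp [Matrix.mulVec, Matrix.vecMulVec_apply, dotProduct, Finset.mul_sum, mul_comm, mul_assoc,
    mul_left_comm]

lemma dot_vecMulVec (u x : n → ℝ) :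
    x ⬝ᵥ (Matrix.vecMulVec u u) *ᵥ x = (u ⬝ᵥ x) ^ 2 := by
  rw [vecMulVec_mulVec', dotProduct_smul, dotProduct_comm x u]
  simp [smul_eq_mul, sq]

lemma posSemidef_vecMulVec (u : n → ℝ) : (Matrix.vecMulVec u u).PosSemidef := by
  refine Matrix.PosSemidef.of_dotProduct_mulVec_nonneg ?_ (fun x => ?_)
  · ext i j
    simp [Matrix.vecMulVec_apply, Matrix.conjTranspose_apply, mul_comm]
  · rw [star_trivial, dot_vecMulVec]
    positivity

open Real in
lemma inv_quad_le_logdet {M B : Matrix n n ℝ} {u : n → ℝ} (hM : M.PosDef) (hB : B.PosDef)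
    (hMB : M = B + Matrix.vecMulVec u u) :
    u ⬝ᵥ M⁻¹ *ᵥ u ≤ Real.log M.det - Real.log B.det := by
  have hMdet : 0 < M.det := hM.det_pos
  have hBdet : 0 < B.det := hB.det_pos
  have h1 : M * M⁻¹ = 1 := Matrix.mul_nonsing_inv _ hMdet.ne'.isUnit
  have hBeq : B = M * (1 - M⁻¹ * Matrix.vecMulVec u u) := by
    rw [Matrix.mul_sub, mul_one, ← mul_assoc, h1, one_mul]
    rw [hMB]; abel
  have hMinvC : M⁻¹ * Matrix.vecMulVec u u = Matrix.vecMulVec (M⁻¹ *ᵥ u) u := by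
    ext i j
    simp [Matrix.mul_apply, Matrix.vecMulVec_apply, Matrix.mulVec, dotProduct,
      Finset.sum_mul, mul_assoc]
  set r : ℝ := u ⬝ᵥ M⁻¹ *ᵥ u with hr
  have hdet1 : Matrix.det (1 - Matrix.vecMulVec (M⁻¹ *ᵥ u) u) = 1 - r := by
    have : (1 : Matrix n n ℝ) - Matrix.vecMulVec (M⁻¹ *ᵥ u) u
        = 1 + Matrix.replicateCol Unit (-(M⁻¹ *ᵥ u)) * Matrix.replicateRow Unit u := by
      rw [← Matrix.vecMulVec_eq]
      rw [sub_eq_add_neg]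
      congr 1
      ext i j
      simp [Matrix.vecMulVec_apply]
    rw [this, Matrix.det_one_add_replicateCol_mul_replicateRow]
    rw [dotProduct_neg]
    rfl
  have hdet : B.det = M.det * (1 - r) := by
    rw [hBeq, Matrix.det_mul, hMinvC, hdet1]
  have hr0 : 0 ≤ r := by
    have := hM.inv.posSemidef.dotProduct_mulVec_nonneg u
    rwa [star_trivial] at this
  have hpos : 0 < 1 - r := by
    have h2 : 0 < M.det * (1 - r) := hdet ▸ hBdet
    nlinarith
  have hq : B.det / M.det = 1 - r := by
    rw [hdet]; field_simp
  have hlog := Real.log_le_sub_one_of_pos (show (0:ℝ) < B.det / M.det by positivity)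
  rw [Real.log_div hBdet.ne' hMdet.ne', hq] at hlog
  linarith

lemma trace_eq_sum_eigenvalues {M : Matrix n n ℝ} (hM : M.IsHermitian) :
    M.trace = ∑ i, hM.eigenvalues i := by
  simpa using hM.trace_eq_sum_eigenvalues

lemma logdet_le_card_mul_log [Nonempty n]
    {M : Matrix n n ℝ} (hM : M.PosDef) :
    Real.log M.det ≤ (Fintype.card n) * Real.log (M.trace / (Fintype.card n)) := by
  set e : n → ℝ := hM.1.eigenvalues with he
  have hepos : ∀ i, 0 < e i := fun i => hM.eigenvalues_pos i
  have hdet : M.det = ∏ i, e i := by simpa using hM.1.det_eq_prod_eigenvalues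
  set c : ℝ := (Fintype.card n : ℝ) with hc
  have hc0 : 0 < c := by positivity
  have amgm : ∏ i, (e i) ^ (c⁻¹) ≤ ∑ i, c⁻¹ * e i :=
    Real.geom_mean_le_arith_mean_weighted Finset.univ (fun _ => c⁻¹) e
      (fun i _ => by positivity)
      (by simp [Finset.sum_const, Finset.card_univ]; exact mul_inv_cancel₀ hc0.ne')
      (fun i _ => (hepos i).le)
  have hprodpos : 0 < ∏ i, (e i) ^ (c⁻¹) :=
    Finset.prod_pos fun i _ => Real.rpow_pos_of_pos (hepos i) _
  have hlog1 : Real.log M.det = c * Real.log (∏ i, (e i) ^ (c⁻¹)) := by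
    rw [hdet, Real.log_prod (fun i _ => (hepos i).ne'),
      Real.log_prod (fun i _ => (Real.rpow_pos_of_pos (hepos i) _).ne'),
      Finset.mul_sum]
    congr 1
    funext i
    rw [Real.log_rpow (hepos i)]
    field_simp
  have hsum : ∑ i, c⁻¹ * e i = M.trace / c := by
    rw [trace_eq_sum_eigenvalues hM.1, ← Finset.mul_sum, div_eq_inv_mul]
  rw [hlog1]
  have := Real.log_le_log hprodpos amgm
  rw [hsum] at this
  exact mul_le_mul_of_nonneg_left this hc0.le

lemma telescope_sub (f : ℕ → ℝ) (N : ℕ) :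
    ∑ t ∈ Finset.Icc 1 N, (f (t - 1) - f t) = f 0 - f N := by
  induction N with
  | zero => simp
  | succ n ih =>
    rw [Finset.sum_Icc_succ_top (by omega : 1 ≤ n + 1), ih]
    simp

lemma telescope_sub' (f : ℕ → ℝ) (N : ℕ) :
    ∑ t ∈ Finset.Icc 1 N, (f t - f (t - 1)) = f N - f 0 := by
  have := telescope_sub (fun t => -f t) N
  simp only [neg_sub_neg] at this
  linarith [this]

end DonsAux
/-- Theorem 3 (dynamic regret of Dynamic ONS against the true minimisers): for `λ`-strongly
convex losses (paper's convention) with `G`-bounded gradients, with `α = λ/G²`,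
`γ = (1/2)min(1/(GD), α)`, `ε = 1/(γ²D²)`, ONS matrices `A_t`, ADJUST contraction in the
`A_t`-norm, and advice `ν` satisfying `ℓ_t(ν_{t+1}) − ℓ_t(μ*_t) ≤ G²(1 + log T)/(λT)`, we get
`Σℓ_t(μ̂_t) − Σℓ_t(μ*_t) ≤ G·P_T(ν) − λ·S_T(ν) + 2((G²/λ)(d+1) + dGD)(1 + log T)`. -/
theorem dons_dynamic_regret {d : ℕ}
    (K : Set (EuclideanSpace ℝ (Fin d))) (hK : Convex ℝ K)
    (D : ℝ) (hD : 0 < D) (hdiam : ∀ x ∈ K, ∀ y ∈ K, ‖x - y‖ ≤ D)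
    (T : ℕ) (hT : 4 ≤ T) (lam G : ℝ) (hlam : 0 < lam) (hG : 0 < G)
    (ℓ : ℕ → EuclideanSpace ℝ (Fin d) → ℝ)
    (g : ℕ → EuclideanSpace ℝ (Fin d) → EuclideanSpace ℝ (Fin d))
    (hdiff : ∀ t, ∀ x, HasGradientAt (ℓ t) (g t x) x)
    (hsc : ∀ t ∈ Icc 1 T, ∀ μ ∈ K, ∀ μ₀ ∈ K,
      ℓ t μ - ℓ t μ₀ ≤ ⟪g t μ, μ - μ₀⟫ - lam * ‖μ - μ₀‖ ^ 2)
    (hGb : ∀ t ∈ Icc 1 T, ∀ x ∈ K, ‖g t x‖ ≤ G)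
    (α γ ε : ℝ) (hα : α = lam / G ^ 2)
    (hγ : γ = 1 / 2 * min (1 / (G * D)) α) (hε : ε = 1 / (γ ^ 2 * D ^ 2))
    (p ν : ℕ → EuclideanSpace ℝ (Fin d))
    (hpK : ∀ t ∈ Icc 1 (T + 1), p t ∈ K) (hνK : ∀ t ∈ Icc 1 (T + 1), ν t ∈ K)
    (A : ℕ → Matrix (Fin d) (Fin d) ℝ)
    (hA0 : A 0 = ε • 1)
    (hArec : ∀ t ∈ Icc 1 T,
      A t = A (t - 1) + Matrix.vecMulVec (g t (p t) : Fin d → ℝ) (g t (p t) : Fin d → ℝ))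
    (hadj : ∀ t ∈ Icc 1 T,
      (p (t + 1) - ν (t + 1)) ⬝ᵥ (A t).mulVec (p (t + 1) - ν (t + 1)) ≤
      ((p t - (1 / γ) • (EuclideanSpace.equiv (Fin d) ℝ).symm ((A t)⁻¹.mulVec (g t (p t)))) - ν t)
        ⬝ᵥ (A t).mulVec
          ((p t - (1 / γ) • (EuclideanSpace.equiv (Fin d) ℝ).symm ((A t)⁻¹.mulVec (g t (p t))))
            - ν t))
    (μstar : ℕ → EuclideanSpace ℝ (Fin d)) (hμstarK : ∀ t ∈ Icc 1 T, μstar t ∈ K)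
    (hmin : ∀ t ∈ Icc 1 T, ∀ y ∈ K, ℓ t (μstar t) ≤ ℓ t y)
    (hνgood : ∀ t ∈ Icc 1 T,
      ℓ t (ν (t + 1)) - ℓ t (μstar t) ≤ G ^ 2 * (1 + Real.log T) / (lam * T)) :
    ∑ t ∈ Icc 1 T, ℓ t (p t) - ∑ t ∈ Icc 1 T, ℓ t (μstar t) ≤
      G * ∑ t ∈ Icc 1 T, ‖ν (t + 1) - ν t‖ - lam * ∑ t ∈ Icc 1 T, ‖ν (t + 1) - ν t‖ ^ 2
        + 2 * (G ^ 2 / lam * (d + 1) + d * G * D) * (1 + Real.log T) := by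
  -- plain-vector abbreviations
  set U : ℕ → Fin d → ℝ := fun t i => g t (p t) i with hU
  set X : ℕ → Fin d → ℝ := fun t i => p t i - ν t i with hX
  set Φ : ℕ → ℝ := fun s => X (s + 1) ⬝ᵥ (A s) *ᵥ X (s + 1) with hΦ
  set R : ℕ → ℝ := fun t => U t ⬝ᵥ (A t)⁻¹ *ᵥ U t with hR
  -- basic positivity
  have hGD : 0 < G * D := mul_pos hG hD
  have hαpos : 0 < α := by rw [hα]; positivity
  have hγpos : 0 < γ := by
    rw [hγ]
    have := lt_min (show (0:ℝ) < 1 / (G * D) by positivity) hαpos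
    linarith
  have hγle1 : γ * (G * D) ≤ 1 / 2 := by
    have h1 : γ ≤ 1 / 2 * (1 / (G * D)) := by
      rw [hγ]
      have := min_le_left (1 / (G * D)) α
      nlinarith
    calc γ * (G * D) ≤ (1 / 2 * (1 / (G * D))) * (G * D) :=
          mul_le_mul_of_nonneg_right h1 hGD.le
      _ = 1 / 2 := by field_simp
  have hγle2 : γ * G ^ 2 ≤ lam / 2 := by
    have h1 : γ ≤ 1 / 2 * α := by
      rw [hγ]
      have := min_le_right (1 / (G * D)) α
      nlinarith
    calc γ * G ^ 2 ≤ (1 / 2 * α) * G ^ 2 :=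
          mul_le_mul_of_nonneg_right h1 (by positivity)
      _ = lam / 2 := by rw [hα]; field_simp
  have hεpos : 0 < ε := by rw [hε]; positivity
  have hinvγ : 1 / (2 * γ) ≤ G * D + G ^ 2 / lam := by
    have hQ : 0 < G ^ 2 / lam := by positivity
    rcases le_total (1 / (G * D)) α with h | h
    · have hγval : γ = 1 / 2 * (1 / (G * D)) := by rw [hγ, min_eq_left h]
      rw [hγval]
      have he : 1 / (2 * (1 / 2 * (1 / (G * D)))) = G * D := by field_simp
      rw [he]; linarith
    · have hγval : γ = 1 / 2 * α := by rw [hγ, min_eq_right h]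
      rw [hγval, hα]
      have he : 1 / (2 * (1 / 2 * (lam / G ^ 2))) = G ^ 2 / lam := by field_simp
      rw [he]; linarith
  have hTpos : (0:ℝ) < T := by exact_mod_cast (by omega : 0 < T)
  have hlogT : 0 ≤ Real.log T := Real.log_nonneg (by exact_mod_cast (by omega : 1 ≤ T))
  -- positive definiteness of the A's
  have hPD : ∀ t, t ≤ T → (A t).PosDef := by
    intro t
    induction t with
    | zero =>
      intro _
      rw [hA0, Matrix.smul_one_eq_diagonal]
      exact Matrix.posDef_diagonal_iff.mpr (fun i => hεpos)
    | succ k ih =>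
      intro hk
      have hk1 : k + 1 ∈ Icc 1 T := mem_Icc.mpr ⟨by omega, hk⟩
      have hrec := hArec (k + 1) hk1
      rw [Nat.add_sub_cancel] at hrec
      rw [hrec]
      exact (ih (by omega)).add_posSemidef (DonsAux.posSemidef_vecMulVec _)
  have hArec' : ∀ t ∈ Icc 1 T, A t = A (t - 1) + Matrix.vecMulVec (U t) (U t) :=
    fun t ht => hArec t ht
  -- ONS per-step inequality
  have step1 : ∀ t ∈ Icc 1 T,
      U t ⬝ᵥ X t - γ / 2 * (U t ⬝ᵥ X t) ^ 2
        ≤ γ / 2 * (Φ (t - 1) - Φ t) + 1 / (2 * γ) * R t := by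
    intro t ht
    obtain ⟨ht1, ht2⟩ := mem_Icc.mp ht
    have hPDt : (A t).PosDef := hPD t ht2
    have hdet : (0:ℝ) < (A t).det := hPDt.det_pos
    set w : Fin d → ℝ := (A t)⁻¹ *ᵥ U t with hw
    have hMw : A t *ᵥ w = U t := by
      rw [hw, Matrix.mulVec_mulVec, Matrix.mul_nonsing_inv _ hdet.ne'.isUnit,
        Matrix.one_mulVec]
    have hadjt : X (t + 1) ⬝ᵥ A t *ᵥ X (t + 1)
        ≤ (X t - (1 / γ) • w) ⬝ᵥ A t *ᵥ (X t - (1 / γ) • w) := by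
      have e : ((p t - (1 / γ) • (EuclideanSpace.equiv (Fin d) ℝ).symm
            ((A t)⁻¹.mulVec (g t (p t)))) - ν t : EuclideanSpace ℝ (Fin d))
          = (X t - (1 / γ) • w : Fin d → ℝ) := by
        funext i
        show (p t i - ((1 / γ) • w) i) - ν t i = _
        simp only [hX, Pi.sub_apply, Pi.smul_apply, smul_eq_mul]
        ring
      have e' : (p t).ofLp - (1 / γ) • ((EuclideanSpace.equiv (Fin d) ℝ).symm
            ((A t)⁻¹.mulVec (g t (p t)))).ofLp - (ν t).ofLp
          = X t - (1 / γ) • w := by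
        funext i
        show (p t i - ((1 / γ) • w) i) - ν t i = _
        simp only [hX, Pi.sub_apply, Pi.smul_apply, smul_eq_mul]
        ring
      have h := hadj t ht
      rw [e, e'] at h
      exact h
    have e2 : w ⬝ᵥ A t *ᵥ X t = U t ⬝ᵥ X t := by
      rw [DonsAux.dot_mulVec_symm hPDt.1 w (X t), hMw]
      exact dotProduct_comm _ _
    have e4 : w ⬝ᵥ U t = R t := by
      simp only [hR]
      rw [hw]
      exact dotProduct_comm _ _
    have hexp : (X t - (1 / γ) • w) ⬝ᵥ A t *ᵥ (X t - (1 / γ) • w)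
        = X t ⬝ᵥ A t *ᵥ X t - 2 / γ * (U t ⬝ᵥ X t) + 1 / γ ^ 2 * R t := by
      have e1 : A t *ᵥ (X t - (1 / γ) • w) = A t *ᵥ X t - (1 / γ) • U t := by
        rw [Matrix.mulVec_sub, Matrix.mulVec_smul, hMw]
      rw [e1, sub_dotProduct, dotProduct_sub, dotProduct_sub,
        smul_dotProduct, smul_dotProduct, dotProduct_smul,
        dotProduct_smul, e2, e4]
      have e3 : X t ⬝ᵥ U t = U t ⬝ᵥ X t := dotProduct_comm _ _
      simp only [smul_eq_mul, e3]
      field_simp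
      ring
    have hXA : X t ⬝ᵥ A t *ᵥ X t = Φ (t - 1) + (U t ⬝ᵥ X t) ^ 2 := by
      have ht' : t - 1 + 1 = t := by omega
      have hΦt : Φ (t - 1) = X t ⬝ᵥ A (t - 1) *ᵥ X t := by
        simp only [hΦ]; rw [ht']
      rw [hArec' t ht, Matrix.add_mulVec, dotProduct_add,
        DonsAux.dot_vecMulVec, hΦt]
    have hle : Φ t ≤ Φ (t - 1) + (U t ⬝ᵥ X t) ^ 2 - 2 / γ * (U t ⬝ᵥ X t)
        + 1 / γ ^ 2 * R t := by
      have h0 : Φ t = X (t + 1) ⬝ᵥ A t *ᵥ X (t + 1) := by simp only [hΦ]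
      rw [h0]
      calc X (t + 1) ⬝ᵥ A t *ᵥ X (t + 1)
          ≤ (X t - (1 / γ) • w) ⬝ᵥ A t *ᵥ (X t - (1 / γ) • w) := hadjt
        _ = X t ⬝ᵥ A t *ᵥ X t - 2 / γ * (U t ⬝ᵥ X t) + 1 / γ ^ 2 * R t := hexp
        _ = Φ (t - 1) + (U t ⬝ᵥ X t) ^ 2 - 2 / γ * (U t ⬝ᵥ X t) + 1 / γ ^ 2 * R t := by
            rw [hXA]
    have hdiff : U t ⬝ᵥ X t - γ / 2 * (U t ⬝ᵥ X t) ^ 2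
        - (γ / 2 * (Φ (t - 1) - Φ t) + 1 / (2 * γ) * R t)
        = -(γ / 2 * ((Φ (t - 1) + (U t ⬝ᵥ X t) ^ 2 - 2 / γ * (U t ⬝ᵥ X t)
            + 1 / γ ^ 2 * R t) - Φ t)) := by
      field_simp
      ring
    have hnn : 0 ≤ γ / 2 * ((Φ (t - 1) + (U t ⬝ᵥ X t) ^ 2 - 2 / γ * (U t ⬝ᵥ X t)
        + 1 / γ ^ 2 * R t) - Φ t) :=
      mul_nonneg (by positivity) (by linarith)
    linarith
  -- exp-concavity style per-step inequality
  have step2 : ∀ t ∈ Icc 1 T,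
      ℓ t (p t) - ℓ t (ν t) ≤ U t ⬝ᵥ X t - γ / 2 * (U t ⬝ᵥ X t) ^ 2 := by
    intro t ht
    obtain ⟨ht1, ht2⟩ := mem_Icc.mp ht
    have hmemp : p t ∈ K := hpK t (mem_Icc.mpr ⟨ht1, by omega⟩)
    have hmemν : ν t ∈ K := hνK t (mem_Icc.mpr ⟨ht1, by omega⟩)
    have h := hsc t ht (p t) hmemp (ν t) hmemν
    have hEq : ⟪g t (p t), p t - ν t⟫ = U t ⬝ᵥ X t := by
      simp only [hU, hX]
      simp [PiLp.inner_apply, dotProduct, PiLp.sub_apply]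
      exact Finset.sum_congr rfl fun i _ => mul_comm _ _
    rw [hEq] at h
    have hg : ‖g t (p t)‖ ≤ G := hGb t ht _ hmemp
    have hcs : |U t ⬝ᵥ X t| ≤ G * ‖p t - ν t‖ := by
      rw [← hEq]
      calc |⟪g t (p t), p t - ν t⟫| ≤ ‖g t (p t)‖ * ‖p t - ν t‖ :=
            abs_real_inner_le_norm _ _
        _ ≤ G * ‖p t - ν t‖ := mul_le_mul_of_nonneg_right hg (norm_nonneg _)
    have h1 : (U t ⬝ᵥ X t) ^ 2 ≤ (G * ‖p t - ν t‖) ^ 2 := by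
      rw [← sq_abs]
      exact pow_le_pow_left₀ (abs_nonneg _) hcs 2
    have h2 : γ / 2 * (U t ⬝ᵥ X t) ^ 2 ≤ γ / 2 * (G * ‖p t - ν t‖) ^ 2 :=
      mul_le_mul_of_nonneg_left h1 (by positivity)
    have h3 : γ * G ^ 2 * ‖p t - ν t‖ ^ 2 ≤ lam / 2 * ‖p t - ν t‖ ^ 2 :=
      mul_le_mul_of_nonneg_right hγle2 (sq_nonneg _)
    nlinarith [mul_nonneg hlam.le (sq_nonneg ‖p t - ν t‖)]
  -- drift per-step inequality
  have step3 : ∀ t ∈ Icc 1 T,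
      ℓ t (ν t) - ℓ t (ν (t + 1))
        ≤ G * ‖ν (t + 1) - ν t‖ - lam * ‖ν (t + 1) - ν t‖ ^ 2 := by
    intro t ht
    obtain ⟨ht1, ht2⟩ := mem_Icc.mp ht
    have hm1 : ν t ∈ K := hνK t (mem_Icc.mpr ⟨ht1, by omega⟩)
    have hm2 : ν (t + 1) ∈ K := hνK (t + 1) (mem_Icc.mpr ⟨by omega, by omega⟩)
    have h := hsc t ht (ν t) hm1 (ν (t + 1)) hm2
    have hrev : ‖ν t - ν (t + 1)‖ = ‖ν (t + 1) - ν t‖ := norm_sub_rev _ _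
    have hg : ‖g t (ν t)‖ ≤ G := hGb t ht _ hm1
    have hip : ⟪g t (ν t), ν t - ν (t + 1)⟫ ≤ G * ‖ν (t + 1) - ν t‖ := by
      calc ⟪g t (ν t), ν t - ν (t + 1)⟫ ≤ ‖g t (ν t)‖ * ‖ν t - ν (t + 1)‖ :=
            real_inner_le_norm _ _
        _ ≤ G * ‖ν t - ν (t + 1)‖ := mul_le_mul_of_nonneg_right hg (norm_nonneg _)
        _ = G * ‖ν (t + 1) - ν t‖ := by rw [hrev]
    rw [hrev] at h
    linarith
  -- telescoped ONS bound
  have hsum1 : ∑ t ∈ Icc 1 T, (ℓ t (p t) - ℓ t (ν t))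
      ≤ γ / 2 * (Φ 0 - Φ T) + 1 / (2 * γ) * ∑ t ∈ Icc 1 T, R t := by
    calc ∑ t ∈ Icc 1 T, (ℓ t (p t) - ℓ t (ν t))
        ≤ ∑ t ∈ Icc 1 T, (γ / 2 * (Φ (t - 1) - Φ t) + 1 / (2 * γ) * R t) :=
          Finset.sum_le_sum (fun t ht => le_trans (step2 t ht) (step1 t ht))
      _ = γ / 2 * ∑ t ∈ Icc 1 T, (Φ (t - 1) - Φ t)
          + 1 / (2 * γ) * ∑ t ∈ Icc 1 T, R t := by
          rw [Finset.sum_add_distrib, Finset.mul_sum, Finset.mul_sum]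
      _ = γ / 2 * (Φ 0 - Φ T) + 1 / (2 * γ) * ∑ t ∈ Icc 1 T, R t := by
          rw [DonsAux.telescope_sub Φ T]
  -- sum of quadratic-form terms via log-det telescoping
  have hsumR : ∑ t ∈ Icc 1 T, R t ≤ Real.log (A T).det - Real.log (A 0).det := by
    have h1 : ∀ t ∈ Icc 1 T, R t ≤ Real.log (A t).det - Real.log (A (t - 1)).det := by
      intro t ht
      obtain ⟨ht1, ht2⟩ := mem_Icc.mp ht
      exact DonsAux.inv_quad_le_logdet (hPD t ht2) (hPD (t - 1) (by omega)) (hArec' t ht)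
    calc ∑ t ∈ Icc 1 T, R t
        ≤ ∑ t ∈ Icc 1 T, (Real.log (A t).det - Real.log (A (t - 1)).det) :=
          Finset.sum_le_sum h1
      _ = Real.log (A T).det - Real.log (A 0).det :=
          DonsAux.telescope_sub' (fun t => Real.log (A t).det) T
  -- bound on gradients as plain vectors
  have hUG2 : ∀ t ∈ Icc 1 T, U t ⬝ᵥ U t ≤ G ^ 2 := by
    intro t ht
    obtain ⟨ht1, ht2⟩ := mem_Icc.mp ht
    have hg : ‖g t (p t)‖ ≤ G := hGb t ht _ (hpK t (mem_Icc.mpr ⟨ht1, by omega⟩))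
    have h4 : U t ⬝ᵥ U t = ‖g t (p t)‖ ^ 2 := by
      simp only [hU]
      rw [EuclideanSpace.norm_eq, Real.sq_sqrt (by positivity)]
      simp [dotProduct, sq]
    rw [h4]
    nlinarith [norm_nonneg (g t (p t))]
  -- log-det bound
  have hlogdet : Real.log (A T).det - Real.log (A 0).det ≤ d * Real.log T := by
    have hdet0 : (A 0).det = ε ^ d := by
      rw [hA0, Matrix.det_smul, Matrix.det_one, mul_one, Fintype.card_fin]
    rcases Nat.eq_zero_or_pos d with hd0 | hd1
    · subst hd0
      rw [Matrix.det_isEmpty (A := A T), Matrix.det_isEmpty (A := A 0)]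
      simp
    · haveI : Nonempty (Fin d) := ⟨⟨0, hd1⟩⟩
      have h1 := DonsAux.logdet_le_card_mul_log (hPD T le_rfl)
      rw [Fintype.card_fin] at h1
      have htr : ∀ N, N ≤ T → (A N).trace ≤ d * ε + N * G ^ 2 := by
        intro N
        induction N with
        | zero =>
          intro _
          rw [hA0, Matrix.trace_smul, Matrix.trace_one, Fintype.card_fin, smul_eq_mul]
          push_cast
          nlinarith [hεpos]
        | succ k ih =>
          intro hk
          have hk1 : k + 1 ∈ Icc 1 T := mem_Icc.mpr ⟨by omega, hk⟩
          have hrec := hArec' (k + 1) hk1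
          rw [Nat.add_sub_cancel] at hrec
          rw [hrec, Matrix.trace_add]
          have h2 : (Matrix.vecMulVec (U (k + 1)) (U (k + 1))).trace
              = U (k + 1) ⬝ᵥ U (k + 1) := by
            simp [Matrix.trace, Matrix.diag, Matrix.vecMulVec_apply, dotProduct]
          rw [h2]
          have hihk := ih (by omega)
          have hUb := hUG2 (k + 1) hk1
          push_cast
          push_cast at hihk
          linarith
      have htrT := htr T le_rfl
      have htrpos : 0 < (A T).trace := by
        rw [DonsAux.trace_eq_sum_eigenvalues (hPD T le_rfl).1]
        exact Finset.sum_pos (fun i _ => (hPD T le_rfl).eigenvalues_pos i)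
          Finset.univ_nonempty
      have hG2ε : G ^ 2 ≤ ε / 4 := by
        have h5 : γ ^ 2 * (G * D) ^ 2 ≤ 1 / 4 := by
          nlinarith [hγle1, mul_pos hγpos hGD]
        rw [hε, div_div, le_div_iff₀ (by positivity : (0:ℝ) < γ ^ 2 * D ^ 2 * 4)]
        nlinarith [h5]
      have hdpos : (0:ℝ) < d := by exact_mod_cast hd1
      have hd1' : (1:ℝ) ≤ d := by exact_mod_cast hd1
      have hT4 : (4:ℝ) ≤ T := by exact_mod_cast hT
      have htrd : (A T).trace / d ≤ T * ε := by
        rw [div_le_iff₀ hdpos]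
        have hTG : (T:ℝ) * G ^ 2 ≤ T * (ε / 4) :=
          mul_le_mul_of_nonneg_left hG2ε hTpos.le
        nlinarith [htrT, hTG, hεpos, mul_nonneg (mul_nonneg hεpos.le
          (sub_nonneg.mpr hd1')) (sub_nonneg.mpr hT4)]
      have hmain : Real.log ((A T).trace / d) ≤ Real.log (T * ε) :=
        Real.log_le_log (by positivity) htrd
      have hlogmul : Real.log ((T:ℝ) * ε) = Real.log T + Real.log ε :=
        Real.log_mul (by positivity) hεpos.ne'
      have hdet0' : Real.log (A 0).det = d * Real.log ε := by
        rw [hdet0, Real.log_pow]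
      rw [hdet0']
      have h6 : (d:ℝ) * Real.log ((A T).trace / d) ≤ d * (Real.log T + Real.log ε) := by
        apply mul_le_mul_of_nonneg_left _ (by positivity)
        rw [← hlogmul]; exact hmain
      nlinarith [h1, h6]
  -- initial and final potential bounds
  have hΦT : 0 ≤ Φ T := by
    have := (hPD T le_rfl).posSemidef.dotProduct_mulVec_nonneg (X (T + 1))
    rwa [star_trivial] at this
  have hΦ0 : Φ 0 ≤ ε * D ^ 2 * d := by
    have h0 : Φ 0 = ε * (X 1 ⬝ᵥ X 1) := by
      simp only [hΦ]
      rw [hA0, Matrix.smul_mulVec, Matrix.one_mulVec, dotProduct_smul,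
        smul_eq_mul]
    have h1 : X 1 ⬝ᵥ X 1 = ‖p 1 - ν 1‖ ^ 2 := by
      simp only [hX]
      rw [EuclideanSpace.norm_eq, Real.sq_sqrt (by positivity)]
      simp [dotProduct, sq]
    rw [h0, h1]
    rcases Nat.eq_zero_or_pos d with hd0 | hd1
    · have hnorm0 : ‖p 1 - ν 1‖ ^ 2 = 0 := by
        rw [← real_inner_self_eq_norm_sq]
        subst hd0
        simp [PiLp.inner_apply]
        ext i; exact i.elim0
      rw [hnorm0, hd0]
      simp
    · have hd1' : (1:ℝ) ≤ d := by exact_mod_cast hd1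
      have hm1 : p 1 ∈ K := hpK 1 (mem_Icc.mpr ⟨le_refl 1, by omega⟩)
      have hm2 : ν 1 ∈ K := hνK 1 (mem_Icc.mpr ⟨le_refl 1, by omega⟩)
      have hdb : ‖p 1 - ν 1‖ ≤ D := hdiam _ hm1 _ hm2
      have h2 : ‖p 1 - ν 1‖ ^ 2 ≤ D ^ 2 := by
        nlinarith [norm_nonneg (p 1 - ν 1)]
      have h3 := mul_le_mul_of_nonneg_left h2 hεpos.le
      nlinarith [mul_pos hεpos (pow_pos hD 2), h3]
  -- full ONS regret bound
  have hONS : ∑ t ∈ Icc 1 T, (ℓ t (p t) - ℓ t (ν t))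
      ≤ (d:ℝ) * (G * D + G ^ 2 / lam) * (1 + Real.log T) := by
    have hRt : ∑ t ∈ Icc 1 T, R t ≤ d * Real.log T := le_trans hsumR hlogdet
    have hc1 : γ / 2 * (Φ 0 - Φ T) ≤ γ / 2 * (ε * D ^ 2 * d) := by
      apply mul_le_mul_of_nonneg_left _ (by positivity)
      linarith
    have hc2 : γ / 2 * (ε * D ^ 2 * (d:ℝ)) = (d:ℝ) * (1 / (2 * γ)) := by
      rw [hε]
      field_simp
    have hc3 : 1 / (2 * γ) * ∑ t ∈ Icc 1 T, R t
        ≤ 1 / (2 * γ) * ((d:ℝ) * Real.log T) :=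
      mul_le_mul_of_nonneg_left hRt (by positivity)
    have hc4 : (d:ℝ) * (1 / (2 * γ)) ≤ (d:ℝ) * (G * D + G ^ 2 / lam) :=
      mul_le_mul_of_nonneg_left hinvγ (Nat.cast_nonneg d)
    calc ∑ t ∈ Icc 1 T, (ℓ t (p t) - ℓ t (ν t))
        ≤ γ / 2 * (Φ 0 - Φ T) + 1 / (2 * γ) * ∑ t ∈ Icc 1 T, R t := hsum1
      _ ≤ (d:ℝ) * (1 / (2 * γ)) + 1 / (2 * γ) * ((d:ℝ) * Real.log T) := by
          rw [← hc2]; linarith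
      _ = (d:ℝ) * (1 / (2 * γ)) * (1 + Real.log T) := by ring
      _ ≤ (d:ℝ) * (G * D + G ^ 2 / lam) * (1 + Real.log T) :=
          mul_le_mul_of_nonneg_right hc4 (by linarith)
  -- drift sum
  have hsum3 : ∑ t ∈ Icc 1 T, (ℓ t (ν t) - ℓ t (ν (t + 1)))
      ≤ G * ∑ t ∈ Icc 1 T, ‖ν (t + 1) - ν t‖
        - lam * ∑ t ∈ Icc 1 T, ‖ν (t + 1) - ν t‖ ^ 2 := by
    calc ∑ t ∈ Icc 1 T, (ℓ t (ν t) - ℓ t (ν (t + 1)))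
        ≤ ∑ t ∈ Icc 1 T, (G * ‖ν (t + 1) - ν t‖ - lam * ‖ν (t + 1) - ν t‖ ^ 2) :=
          Finset.sum_le_sum step3
      _ = _ := by rw [Finset.sum_sub_distrib, Finset.mul_sum, Finset.mul_sum]
  -- advice quality sum
  have hsum4 : ∑ t ∈ Icc 1 T, (ℓ t (ν (t + 1)) - ℓ t (μstar t))
      ≤ G ^ 2 * (1 + Real.log T) / lam := by
    have hTne : (T:ℝ) ≠ 0 := hTpos.ne'
    calc ∑ t ∈ Icc 1 T, (ℓ t (ν (t + 1)) - ℓ t (μstar t))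
        ≤ ∑ _t ∈ Icc 1 T, G ^ 2 * (1 + Real.log T) / (lam * T) :=
          Finset.sum_le_sum hνgood
      _ = (T:ℝ) * (G ^ 2 * (1 + Real.log T) / (lam * T)) := by
          rw [Finset.sum_const, Nat.card_Icc, nsmul_eq_mul]
          norm_num
      _ = G ^ 2 * (1 + Real.log T) / lam := by field_simp
  -- decomposition
  have hdecomp : ∑ t ∈ Icc 1 T, ℓ t (p t) - ∑ t ∈ Icc 1 T, ℓ t (μstar t)
      = ∑ t ∈ Icc 1 T, (ℓ t (p t) - ℓ t (ν t))
        + ∑ t ∈ Icc 1 T, (ℓ t (ν t) - ℓ t (ν (t + 1)))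
        + ∑ t ∈ Icc 1 T, (ℓ t (ν (t + 1)) - ℓ t (μstar t)) := by
    rw [← Finset.sum_add_distrib, ← Finset.sum_add_distrib, ← Finset.sum_sub_distrib]
    apply Finset.sum_congr rfl
    intro t _
    ring
  -- final numeric bound
  have hnum : (d:ℝ) * (G * D + G ^ 2 / lam) * (1 + Real.log T)
      + G ^ 2 * (1 + Real.log T) / lam
      ≤ 2 * (G ^ 2 / lam * (d + 1) + d * G * D) * (1 + Real.log T) := by
    have hQ : 0 < G ^ 2 / lam := by positivity
    have h1L : 0 ≤ 1 + Real.log T := by linarith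
    have hd0 : (0:ℝ) ≤ d := Nat.cast_nonneg d
    have hkey : 2 * (G ^ 2 / lam * (d + 1) + (d:ℝ) * G * D) * (1 + Real.log T)
        - ((d:ℝ) * (G * D + G ^ 2 / lam) * (1 + Real.log T)
          + G ^ 2 * (1 + Real.log T) / lam)
        = (1 + Real.log T) * (G ^ 2 / lam * d + G ^ 2 / lam + (d:ℝ) * (G * D)) := by
      field_simp
      ring
    have hpos : 0 ≤ (1 + Real.log T)
        * (G ^ 2 / lam * d + G ^ 2 / lam + (d:ℝ) * (G * D)) := by
      apply mul_nonneg h1L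
      nlinarith [mul_nonneg hd0 hGD.le, mul_nonneg hQ.le hd0]
    linarith
  linarith [hdecomp, hONS, hsum3, hsum4, hnum]
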